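/- Let u : ℝ≥0 → ℝ be strictly quasiconcave and attain its maximum at a unique point x⋆ ∈ ℝ≥0, let c₁ : ℝ≥0 → ℝ≥0 be strictly increasing, let x_s ∈ ℝ≥0, and let V : ℝ≥0 → ℝ be upper semicontinuous. Then V attains a maximum on the set max(ℝ≥0, ≽) of maximal elements of the one-many ordering; that is, there exists x̂ ∈ max(ℝ≥0, ≽) such that V(x̂) ≥ V(x) for all x ∈ max(ℝ≥0, ≽). -/

import Mathlib

open NNReal Set

/-- Strict quasiconcavity of a function `u : ℝ≥0 → ℝ`:
for all distinct `x, y` and all `λ ∈ (0,1)`, `u (λx + (1-λ)y) > min (u x) (u y)`. -/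
def StrictQuasiconcave (u : ℝ≥0 → ℝ) : Prop :=
  ∀ x y : ℝ≥0, x ≠ y → ∀ l : ℝ≥0, 0 < l → l < 1 →
    min (u x) (u y) < u (l * x + (1 - l) * y)

/-- The one-many ordering `x ≽ y` on `ℝ≥0`, given personal utility `u`,
cost `c₁` of current social distance, and social reference point `xs`. -/
def OneMany (u : ℝ≥0 → ℝ) (c₁ : ℝ≥0 → ℝ≥0) (xs : ℝ≥0) (x y : ℝ≥0) : Prop :=
  u y ≤ u x ∧ c₁ (nndist x xs) ≤ c₁ (nndist y xs)

/-- The strict part `x ≻ y` of the one-many ordering. -/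
def OneManyStrict (u : ℝ≥0 → ℝ) (c₁ : ℝ≥0 → ℝ≥0) (xs : ℝ≥0) (x y : ℝ≥0) : Prop :=
  OneMany u c₁ xs x y ∧ ¬ OneMany u c₁ xs y x

/-- The set `max(ℝ≥0, ≽)` of maximal elements of the one-many ordering:
the agent's consideration set. -/
def maxSet (u : ℝ≥0 → ℝ) (c₁ : ℝ≥0 → ℝ≥0) (xs : ℝ≥0) : Set ℝ≥0 :=
  {x : ℝ≥0 | ¬ ∃ y : ℝ≥0, OneManyStrict u c₁ xs y x}

/-- An upper semicontinuous function attains its maximum on a nonempty compact set. -/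
lemma usc_exists_max {S : Set ℝ≥0} (hS : IsCompact S) (hne : S.Nonempty)
    (V : ℝ≥0 → ℝ) (hV : UpperSemicontinuous V) :
    ∃ x ∈ S, ∀ y ∈ S, V y ≤ V x := by
  have h := hS.inter_iInter_nonempty (fun i : S => V ⁻¹' Ici (V i))
    (fun i => hV.isClosed_preimage (V i)) ?_
  · obtain ⟨x, hxS, hx⟩ := h
    exact ⟨x, hxS, fun y hy => mem_iInter.1 hx ⟨y, hy⟩⟩
  · intro t
    rcases t.eq_empty_or_nonempty with rfl | ht
    · simpa using hne
    · obtain ⟨b, hbt, hb⟩ := t.exists_max_image (fun i : S => V i) ht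
      exact ⟨b, b.2, mem_iInter₂.2 fun i hi => hb i hi⟩

theorem exists_fundamental_choice
    (u : ℝ≥0 → ℝ) (c₁ : ℝ≥0 → ℝ≥0) (xstar xs : ℝ≥0)
    (hu : StrictQuasiconcave u)
    (hmax : ∀ y : ℝ≥0, u y ≤ u xstar)
    (huniq : ∀ y : ℝ≥0, (∀ z : ℝ≥0, u z ≤ u y) → y = xstar)
    (hc : StrictMono c₁)
    (V : ℝ≥0 → ℝ) (hV : UpperSemicontinuous V) :
    ∃ xhat ∈ maxSet u c₁ xs, ∀ x ∈ maxSet u c₁ xs, V x ≤ V xhat := by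
  -- u y < u xstar for y ≠ xstar
  have hlt : ∀ y : ℝ≥0, y ≠ xstar → u y < u xstar := by
    intro y hy
    refine lt_of_le_of_ne (hmax y) fun h => hy (huniq y fun z => ?_)
    exact (hmax z).trans h.ge
  -- u strictly increasing on [0, xstar]
  have hincr : ∀ a b : ℝ≥0, a < b → b ≤ xstar → u a < u b := by
    intro a b hab hbx
    rcases eq_or_lt_of_le hbx with rfl | hbx'
    · exact hlt a hab.ne
    · have hax : a < xstar := hab.trans hbx'
      set l : ℝ≥0 := (xstar - b) / (xstar - a) with hl
      have hl0 : 0 < l := div_pos (tsub_pos_of_lt hbx') (tsub_pos_of_lt hax)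
      have hsub : xstar - b < xstar - a := by
        rw [← NNReal.coe_lt_coe, NNReal.coe_sub hbx'.le, NNReal.coe_sub hax.le]
        have : (a : ℝ) < b := hab
        linarith
      have hl1 : l < 1 := (div_lt_one (tsub_pos_of_lt hax)).2 hsub
      have key : b = l * a + (1 - l) * xstar := by
        apply NNReal.coe_injective
        have hden : (0:ℝ) < (xstar : ℝ) - a := by
          have : (a : ℝ) < xstar := hax
          linarith
        rw [NNReal.coe_add, NNReal.coe_mul, NNReal.coe_mul, NNReal.coe_sub hl1.le,
          NNReal.coe_one, hl, NNReal.coe_div, NNReal.coe_sub hbx'.le, NNReal.coe_sub hax.le]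
        field_simp
        ring
      have := hu a xstar hax.ne l hl0 hl1
      rw [← key, min_eq_left (hlt a hax.ne).le] at this
      exact this
  -- u strictly decreasing on [xstar, ∞)
  have hdecr : ∀ a b : ℝ≥0, xstar ≤ a → a < b → u b < u a := by
    intro a b hxa hab
    rcases eq_or_lt_of_le hxa with rfl | hxa'
    · exact hlt b hab.ne'
    · have hxb : xstar < b := hxa'.trans hab
      set l : ℝ≥0 := (b - a) / (b - xstar) with hl
      have hl0 : 0 < l := div_pos (tsub_pos_of_lt hab) (tsub_pos_of_lt hxb)
      have hsub : b - a < b - xstar := by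
        rw [← NNReal.coe_lt_coe, NNReal.coe_sub hab.le, NNReal.coe_sub hxb.le]
        have : (xstar : ℝ) < a := hxa'
        linarith
      have hl1 : l < 1 := (div_lt_one (tsub_pos_of_lt hxb)).2 hsub
      have key : a = l * xstar + (1 - l) * b := by
        apply NNReal.coe_injective
        have hden : (0:ℝ) < (b : ℝ) - xstar := by
          have : (xstar : ℝ) < b := hxb
          linarith
        rw [NNReal.coe_add, NNReal.coe_mul, NNReal.coe_mul, NNReal.coe_sub hl1.le,
          NNReal.coe_one, hl, NNReal.coe_div, NNReal.coe_sub hab.le, NNReal.coe_sub hxb.le]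
        field_simp
        ring
      have := hu xstar b hxb.ne l hl0 hl1
      rw [← key, min_eq_right (hlt b hxb.ne').le] at this
      exact this
  -- characterize maxSet
  set lo := min xs xstar with hlo
  set hi := max xs xstar with hhi
  have hset : maxSet u c₁ xs = Icc lo hi := by
    ext x
    simp only [maxSet, mem_setOf_eq, mem_Icc]
    constructor
    · intro hx
      by_contra hnot
      rw [not_and_or, not_le, not_le] at hnot
      apply hx
      rcases hnot with hxlo | hxhi
      · -- x < lo : dominated by lo
        refine ⟨lo, ⟨?_, hc.monotone ?_⟩, fun h => absurd h.1 (not_le.2 ?_)⟩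
        · rcases le_total xs xstar with hcase | hcase
          · rw [hlo, min_eq_left hcase] at hxlo ⊢
            exact (hincr x xs hxlo hcase).le
          · rw [hlo, min_eq_right hcase] at hxlo ⊢
            exact (hlt x hxlo.ne).le
        · have hxxs : x < xs := lt_of_lt_of_le hxlo (min_le_left _ _)
          rw [NNReal.nndist_eq, NNReal.nndist_eq,
            tsub_eq_zero_of_le (min_le_left xs xstar : lo ≤ xs),
            tsub_eq_zero_of_le hxxs.le]
          exact max_le zero_le (le_max_of_le_right (tsub_le_tsub_left hxlo.le xs))
        · rcases le_total xs xstar with hcase | hcase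
          · rw [hlo, min_eq_left hcase] at hxlo ⊢
            exact hincr x xs hxlo hcase
          · rw [hlo, min_eq_right hcase] at hxlo ⊢
            exact hlt x hxlo.ne
      · -- hi < x : dominated by hi
        refine ⟨hi, ⟨?_, hc.monotone ?_⟩, fun h => absurd h.1 (not_le.2 ?_)⟩
        · rcases le_total xs xstar with hcase | hcase
          · rw [hhi, max_eq_right hcase] at hxhi ⊢
            exact (hlt x hxhi.ne').le
          · rw [hhi, max_eq_left hcase] at hxhi ⊢
            exact (hdecr xs x hcase hxhi).le
        · have hxsx : xs < x := lt_of_le_of_lt (le_max_left _ _) hxhi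
          rw [NNReal.nndist_eq, NNReal.nndist_eq,
            tsub_eq_zero_of_le (le_max_left xs xstar : xs ≤ hi),
            tsub_eq_zero_of_le hxsx.le]
          exact max_le (le_max_of_le_left (tsub_le_tsub_right hxhi.le xs)) zero_le
        · rcases le_total xs xstar with hcase | hcase
          · rw [hhi, max_eq_right hcase] at hxhi ⊢
            exact hlt x hxhi.ne'
          · rw [hhi, max_eq_left hcase] at hxhi ⊢
            exact hdecr xs x hcase hxhi
    · rintro ⟨hlox, hxhi⟩ ⟨y, ⟨⟨hu1, hu2⟩, hns⟩⟩
      have hd : nndist y xs ≤ nndist x xs := hc.le_iff_le.1 hu2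
      have hyx : y = x := by
        rcases le_total xs xstar with hcase | hcase
        · -- xs ≤ x ≤ xstar
          have hxsx : xs ≤ x := by rw [hlo, min_eq_left hcase] at hlox; exact hlox
          have hxX : x ≤ xstar := by rw [hhi, max_eq_right hcase] at hxhi; exact hxhi
          have hdx : nndist x xs = x - xs := by
            rw [NNReal.nndist_eq, tsub_eq_zero_of_le hxsx, max_eq_left zero_le]
          have hyle : y ≤ x := by
            rcases le_total y xs with h | h
            · exact le_trans h hxsx
            · have hsub : y - xs ≤ x - xs := by
                rw [hdx] at hd
                calc y - xs ≤ nndist y xs := by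
                      rw [NNReal.nndist_eq]; exact le_max_left _ _
                  _ ≤ x - xs := hd
              rw [← NNReal.coe_le_coe, NNReal.coe_sub h, NNReal.coe_sub hxsx] at hsub
              rw [← NNReal.coe_le_coe]
              linarith
          rcases eq_or_lt_of_le hyle with h | h
          · exact h
          · exact absurd hu1 (not_le.2 (hincr y x h hxX))
        · -- xstar ≤ x ≤ xs
          have hXx : xstar ≤ x := by rw [hlo, min_eq_right hcase] at hlox; exact hlox
          have hxxs : x ≤ xs := by rw [hhi, max_eq_left hcase] at hxhi; exact hxhi
          have hdx : nndist x xs = xs - x := by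
            rw [NNReal.nndist_eq, tsub_eq_zero_of_le hxxs, max_eq_right zero_le]
          have hyge : x ≤ y := by
            rcases le_total xs y with h | h
            · exact le_trans hxxs h
            · have hsub : xs - y ≤ xs - x := by
                rw [hdx] at hd
                calc xs - y ≤ nndist y xs := by
                      rw [NNReal.nndist_eq]; exact le_max_right _ _
                  _ ≤ xs - x := hd
              rw [← NNReal.coe_le_coe, NNReal.coe_sub h, NNReal.coe_sub hxxs] at hsub
              rw [← NNReal.coe_le_coe]
              linarith
          rcases eq_or_lt_of_le hyge with h | h
          · exact h.symm
          · exact absurd hu1 (not_le.2 (hdecr x y hXx h))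
      subst hyx
      exact hns ⟨hu1, hu2⟩
  rw [hset]
  exact usc_exists_max isCompact_Icc (nonempty_Icc.2 (le_trans (min_le_left xs xstar) (le_max_left xs xstar))) V hV
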